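/- arXiv:2407.08941 — 2 statements merged into one kernel-verified Lean document; each statement's English description precedes it below -/
import Mathlib

section
/- For any vector (q_1, …, q_{m−1}) of non-negative integers with at least one q_i > 0, if 2 + Σ_{i=1}^{m−1} i·q_i = n, then there exists a tree with exactly n leaves whose internal nodes have degrees between 3 and m+1, such that for each i the number of internal nodes of degree i+2 is exactly q_i. -/
open Finset

section ParentGraph

variable {V : Type}

/-- Graph given by a parent map. -/
def pG (p : V → V) : SimpleGraph V where
  Adj a b := a ≠ b ∧ (p a = b ∨ p b = a)
  symm := by constructor; rintro a b ⟨h1, h2⟩; exact ⟨h1.symm, by tauto⟩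
  loopless := by constructor; rintro a ⟨h1, _⟩; exact h1 rfl

instance pG.instDec (p : V → V) [DecidableEq V] : DecidableRel (pG p).Adj := fun a b =>
  inferInstanceAs (Decidable (a ≠ b ∧ (p a = b ∨ p b = a)))

lemma pG_adj (p : V → V) (a b : V) : (pG p).Adj a b ↔ a ≠ b ∧ (p a = b ∨ p b = a) := Iff.rfl

variable {p : V → V} {root : V} {r : V → ℕ}

lemma pG_connected (hroot : p root = root) (hr : ∀ v, v ≠ root → r (p v) < r v) :
    (pG p).Connected := by
  have key : ∀ n (v : V), r v ≤ n → (pG p).Reachable v root := by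
    intro n
    induction n with
    | zero =>
      intro v hv
      by_cases h : v = root
      · exact h ▸ SimpleGraph.Reachable.refl _
      · exact absurd (Nat.lt_of_lt_of_le (hr v h) hv) (Nat.not_lt_zero _)
    | succ n ih =>
      intro v hv
      by_cases h : v = root
      · exact h ▸ SimpleGraph.Reachable.refl _
      · have h1 : r (p v) < r v := hr v h
        have hadj : (pG p).Adj v (p v) := by
          refine ⟨fun he => ?_, Or.inl rfl⟩
          · rw [← he] at h1; exact absurd h1 (lt_irrefl _)
        exact (hadj.reachable).trans (ih (p v) (by omega))
  haveI : Nonempty V := ⟨root⟩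
  exact ⟨fun u v => (key (r u) u le_rfl).trans (key (r v) v le_rfl).symm⟩

lemma pG_acyclic (hroot : p root = root) (hr : ∀ v, v ≠ root → r (p v) < r v) :
    (pG p).IsAcyclic := by
  classical
  intro v c hc
  -- pick vertex of max rank in support
  have hsne : c.support.toFinset.Nonempty := ⟨v, by simp [SimpleGraph.Walk.start_mem_support]⟩
  obtain ⟨w, hwmem, hwmax⟩ := Finset.exists_max_image c.support.toFinset r hsne
  rw [List.mem_toFinset] at hwmem
  have hwmax' : ∀ x, x ∈ c.support → r x ≤ r w := fun x hx => hwmax x (List.mem_toFinset.2 hx)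
  set c' := c.rotate w hwmem with hc'def
  have hc' : c'.IsCycle := hc.rotate hwmem
  -- all of c'.support is in c.support
  have hsupp : ∀ x, x ∈ c'.support → x ∈ c.support := by
    intro x hx
    rw [SimpleGraph.Walk.support_eq_cons c'] at hx
    rcases List.mem_cons.1 hx with h | h
    · exact h ▸ hwmem
    · have := (SimpleGraph.Walk.support_rotate c w hwmem).mem_iff.1 h
      exact List.mem_of_mem_tail this
  -- any neighbor of w inside c.support is p w
  have hnbr : ∀ u, (pG p).Adj w u → u ∈ c.support → u = p w := by
    intro u hadj hu
    rcases hadj.2 with h | h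
    · exact h.symm
    · exfalso
      have hune : u ≠ root := by
        intro he; subst he; rw [hroot] at h; exact hadj.1 h.symm
      have := hr u hune
      rw [h] at this
      exact absurd (Nat.lt_of_lt_of_le this (hwmax' u hu)) (lt_irrefl _)
  -- decompose c'
  have hnn : ¬ c'.Nil := hc'.not_nil
  obtain ⟨u, hadj, q, hq⟩ := SimpleGraph.Walk.not_nil_iff.1 hnn
  have hnn2 : ¬ c'.reverse.Nil := by
    rw [SimpleGraph.Walk.nil_iff_length_eq, SimpleGraph.Walk.length_reverse]
    have := hc'.three_le_length; omega
  obtain ⟨u2, hadj2, q2, hq2⟩ := SimpleGraph.Walk.not_nil_iff.1 hnn2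
  have hu : u = p w := by
    apply hnbr u hadj
    apply hsupp
    rw [hq, SimpleGraph.Walk.support_cons]
    exact List.mem_cons_of_mem _ q.start_mem_support
  have hu2 : u2 = p w := by
    apply hnbr u2 hadj2
    apply hsupp
    have : u2 ∈ c'.reverse.support := by
      rw [hq2, SimpleGraph.Walk.support_cons]
      exact List.mem_cons_of_mem _ q2.start_mem_support
    rwa [SimpleGraph.Walk.support_reverse, List.mem_reverse] at this
  subst hu
  subst hu2
  -- edges
  have hE1 : c'.edges = s(w, p w) :: q.edges := by
    rw [hq, SimpleGraph.Walk.edges_cons]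
  have hE2 : c'.edges.reverse = s(w, p w) :: q2.edges := by
    rw [← SimpleGraph.Walk.edges_reverse, hq2, SimpleGraph.Walk.edges_cons]
  have hnd : c'.edges.Nodup := hc'.edges_nodup
  have hlen : 3 ≤ c'.edges.length := by
    rw [SimpleGraph.Walk.length_edges]; exact hc'.three_le_length
  -- contradiction
  have hE3 : c'.edges = q2.edges.reverse ++ [s(w, p w)] := by
    rw [← List.reverse_reverse c'.edges, hE2]; simp
  rw [hE1] at hE3 hnd hlen
  cases hq2rev : q2.edges.reverse with
  | nil => rw [hq2rev] at hE3; simp at hE3; have := SimpleGraph.Walk.nil_iff_length_eq.1 hE3; simp at hlen; omega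
  | cons b rest =>
    rw [hq2rev] at hE3
    simp only [List.cons_append, List.cons.injEq] at hE3
    have : s(w, p w) ∈ q.edges := by rw [hE3.2]; simp
    simp only [List.nodup_cons] at hnd
    exact hnd.1 this

lemma pG_isTree (hroot : p root = root) (hr : ∀ v, v ≠ root → r (p v) < r v) :
    (pG p).IsTree :=
  ⟨pG_connected hroot hr, pG_acyclic hroot hr⟩

lemma pG_degree [Fintype V] [DecidableEq V]
    (hroot : p root = root) (hr : ∀ v, v ≠ root → r (p v) < r v) (v : V) :
    (pG p).degree v =
      (univ.filter fun w => p w = v ∧ w ≠ v).card + (if v = root then 0 else 1) := by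
  classical
  rw [← SimpleGraph.card_neighborFinset_eq_degree, SimpleGraph.neighborFinset_eq_filter]
  by_cases hv : v = root
  · subst hv
    rw [if_pos rfl, Nat.add_zero]
    congr 1
    apply Finset.filter_congr
    intro w _
    simp only [pG_adj]
    constructor
    · rintro ⟨h1, h2 | h2⟩
      · rw [hroot] at h2; exact absurd h2.symm (Ne.symm h1)
      · exact ⟨h2, Ne.symm h1⟩
    · rintro ⟨h1, h2⟩
      exact ⟨fun he => h2 he.symm, Or.inr h1⟩
  · rw [if_neg hv]
    have hpv : p v ≠ v := fun he => absurd (he ▸ hr v hv) (lt_irrefl _)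
    have hset : (univ.filter fun w => (pG p).Adj v w) =
        insert (p v) (univ.filter fun w => p w = v ∧ w ≠ v) := by
      ext w
      simp only [Finset.mem_insert, Finset.mem_filter, Finset.mem_univ, true_and, pG_adj]
      constructor
      · rintro ⟨h1, h2 | h2⟩
        · exact Or.inl h2.symm
        · exact Or.inr ⟨h2, fun he => h1 he.symm⟩
      · rintro (rfl | ⟨h1, h2⟩)
        · exact ⟨fun he => hpv he.symm, Or.inl rfl⟩
        · exact ⟨fun he => h2 he.symm, Or.inr h1⟩
    rw [hset, Finset.card_insert_of_notMem]
    intro hmem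
    rw [Finset.mem_filter] at hmem
    obtain ⟨-, h1, h2⟩ := hmem
    by_cases hpr : p v = root
    · rw [hpr, hroot] at h1; exact hv h1.symm
    · have ha := hr (p v) hpr
      have hb := hr v hv
      rw [h1] at ha
      omega

end ParentGraph
open Finset

lemma card_filter_sum {α β : Type} [Fintype α] [Fintype β]
    (P : α ⊕ β → Prop) [DecidablePred P] :
    ((univ : Finset (α ⊕ β)).filter P).card =
      ((univ : Finset α).filter (fun a => P (Sum.inl a))).card +
      ((univ : Finset β).filter (fun b => P (Sum.inr b))).card := by
  rw [← Finset.card_disjSum]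
  congr 1
  ext x
  cases x <;> simp

lemma card_filter_sigma_fst {k : ℕ} (c : Fin k → ℕ) (j : Fin k) :
    ((univ : Finset (Σ j' : Fin k, Fin (c j'))).filter fun x => x.1 = j).card = c j := by
  have : ((univ : Finset (Σ j' : Fin k, Fin (c j'))).filter fun x => x.1 = j)
      = ({j} : Finset (Fin k)).sigma (fun j' => (univ : Finset (Fin (c j')))) := by
    ext ⟨a, b⟩
    simp [eq_comm]
  rw [this, Finset.card_sigma]
  simp

lemma card_filter_fin_val_eq (k v : ℕ) :
    (((univ : Finset (Fin k))).filter fun j : Fin k => (j : ℕ) = v).card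
      = if v < k then 1 else 0 := by
  split_ifs with h
  · rw [show ((univ : Finset (Fin k)).filter fun j : Fin k => (j : ℕ) = v)
        = {(⟨v, h⟩ : Fin k)} from by ext j; simp [Fin.ext_iff]]
    simp
  · rw [Finset.filter_false_of_mem, Finset.card_empty]
    intro j _
    have := j.2
    omega

lemma sum_getD_eq_sum (L : List ℕ) (f : ℕ → ℕ) :
    ∑ j ∈ Finset.range L.length, f (L.getD j 0) = (L.map f).sum := by
  induction L with
  | nil => simp
  | cons a t ih =>
    rw [List.length_cons, Finset.sum_range_succ']
    simp only [List.getD_cons_succ, List.getD_cons_zero, ih, List.map_cons, List.sum_cons]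
    omega

lemma fin_sum_get (L : List ℕ) (f : ℕ → ℕ) :
    ∑ j : Fin L.length, f (L.get j) = (L.map f).sum := by
  rw [← sum_getD_eq_sum L f, ← Fin.sum_univ_eq_sum_range]
  apply Finset.sum_congr rfl
  intro j _
  rw [List.getD_eq_get (i := j)]

lemma sum_map_ite_count (L : List ℕ) (i : ℕ) :
    (L.map fun x => if x = i then 1 else 0).sum = L.count i := by
  induction L with
  | nil => simp
  | cons a t ih =>
    simp only [List.map_cons, List.sum_cons, List.count_cons, beq_iff_eq, ih]
    split_ifs with h <;> omega

lemma card_filter_get_eq (L : List ℕ) (i : ℕ) :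
    ((univ : Finset (Fin L.length)).filter fun j => L.get j = i).card = L.count i := by
  rw [Finset.card_filter]
  have h1 : ∀ j : Fin L.length, (if L.get j = i then 1 else 0) =
      (fun x => if x = i then 1 else 0) (L.getD (j : ℕ) 0) := by
    intro j; rw [List.getD_eq_get (i := j)]
  calc ∑ j : Fin L.length, (if L.get j = i then 1 else 0)
      = ∑ j : Fin L.length, (if L.getD ((j:ℕ)) 0 = i then (1:ℕ) else 0) :=
        Finset.sum_congr rfl (fun j _ => h1 j)
    _ = ∑ j ∈ Finset.range L.length, (if L.getD j 0 = i then (1:ℕ) else 0) :=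
        Fin.sum_univ_eq_sum_range (fun j => if L.getD j 0 = i then (1:ℕ) else 0) L.length
    _ = (L.map fun x => if x = i then 1 else 0).sum := by
        simpa using sum_getD_eq_sum L (fun x => if x = i then 1 else 0)
    _ = L.count i := sum_map_ite_count L i

section Concrete

variable {k : ℕ} {c : Fin k → ℕ}

/-- parent map for the caterpillar construction -/
def cpar (c : Fin k → ℕ) : (Fin k ⊕ Σ j : Fin k, Fin (c j)) → (Fin k ⊕ Σ j : Fin k, Fin (c j))
  | Sum.inl j => Sum.inl ⟨(j : ℕ) - 1, lt_of_le_of_lt (Nat.sub_le _ _) j.2⟩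
  | Sum.inr x => Sum.inl x.1

/-- rank function -/
def crk (c : Fin k → ℕ) : (Fin k ⊕ Σ j : Fin k, Fin (c j)) → ℕ
  | Sum.inl j => j
  | Sum.inr _ => k

@[simp] lemma cpar_inl (j : Fin k) :
    cpar c (Sum.inl j) = Sum.inl ⟨(j : ℕ) - 1, lt_of_le_of_lt (Nat.sub_le _ _) j.2⟩ := rfl
@[simp] lemma cpar_inr (x : Σ j : Fin k, Fin (c j)) : cpar c (Sum.inr x) = Sum.inl x.1 := rfl
@[simp] lemma crk_inl (j : Fin k) : crk c (Sum.inl j) = j := rfl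
@[simp] lemma crk_inr (x : Σ j : Fin k, Fin (c j)) : crk c (Sum.inr x) = k := rfl

lemma cpar_root (hk : 0 < k) : cpar c (Sum.inl ⟨0, hk⟩) = Sum.inl ⟨0, hk⟩ := rfl

lemma crk_spec (hk : 0 < k) :
    ∀ v, v ≠ Sum.inl ⟨0, hk⟩ → crk c (cpar c v) < crk c v := by
  rintro (j | x) hv
  · simp only [Ne, Sum.inl.injEq] at hv
    have hj : (j : ℕ) ≠ 0 := fun h => hv (Fin.ext h)
    simp only [cpar_inl, crk_inl]
    omega
  · simp only [cpar_inr, crk_inl, crk_inr]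
    exact x.1.2

lemma cdeg_inr (hk : 0 < k) (x : Σ j : Fin k, Fin (c j)) :
    (pG (cpar c)).degree (Sum.inr x) = 1 := by
  classical
  rw [pG_degree (cpar_root hk) (crk_spec hk)]
  rw [Finset.filter_false_of_mem, Finset.card_empty, if_neg (by simp)]
  rintro (j | y) - h
  · exact absurd h.1 (by simp)
  · exact absurd h.1 (by simp)

lemma cdeg_inl (hk : 0 < k) (j : Fin k) :
    (pG (cpar c)).degree (Sum.inl j) =
      (if (j : ℕ) + 1 < k then 1 else 0) + c j + (if (j : ℕ) = 0 then 0 else 1) := by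
  classical
  rw [pG_degree (cpar_root hk) (crk_spec hk), card_filter_sum]
  have h1 : ((univ : Finset (Fin k)).filter
      (fun a => cpar c (Sum.inl a) = Sum.inl j ∧
        (Sum.inl a : Fin k ⊕ Σ j' : Fin k, Fin (c j')) ≠ Sum.inl j)).card
      = if (j : ℕ) + 1 < k then 1 else 0 := by
    rw [← card_filter_fin_val_eq k ((j : ℕ) + 1)]
    congr 1
    apply Finset.filter_congr
    intro a _
    simp only [cpar_inl, Sum.inl.injEq, Ne, Fin.ext_iff]
    constructor
    · rintro ⟨h1, h2⟩; omega
    · intro h; omega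
  have h2 : ((univ : Finset (Σ j' : Fin k, Fin (c j'))).filter
      (fun x => cpar c (Sum.inr x) = Sum.inl j ∧
        (Sum.inr x : Fin k ⊕ Σ j' : Fin k, Fin (c j')) ≠ Sum.inl j)).card = c j := by
    rw [← card_filter_sigma_fst c j]
    congr 1
    apply Finset.filter_congr
    intro x _
    simp [Sum.inl.injEq]
  rw [h1, h2]
  have heq : (Sum.inl j = (Sum.inl ⟨0, hk⟩ : Fin k ⊕ Σ j' : Fin k, Fin (c j'))) ↔ (j : ℕ) = 0 := by
    simp [Fin.ext_iff]
  simp only [heq]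

end Concrete

lemma main_construction (m n : ℕ) (hm : 2 ≤ m) (L : List ℕ) (hL : L ≠ [])
    (hmem : ∀ x ∈ L, 1 ≤ x ∧ x ≤ m - 1) (hsum : 2 + L.sum = n) :
    ∃ (V : Type) (_ : Fintype V) (_ : DecidableEq V) (G : SimpleGraph V)
      (_ : DecidableRel G.Adj),
      G.IsTree ∧
      (Finset.univ.filter (fun v => G.degree v = 1)).card = n ∧
      (∀ v : V, G.degree v ≠ 1 → 3 ≤ G.degree v ∧ G.degree v ≤ m + 1) ∧
      (∀ i : ℕ, 1 ≤ i →
        (Finset.univ.filter (fun v => G.degree v = i + 2)).card = L.count i) := by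
  classical
  have hk : 0 < L.length := List.length_pos_iff.2 hL
  set c : Fin L.length → ℕ := fun j =>
    L.get j + 2 - ((if (j : ℕ) = 0 then 0 else 1) + (if (j : ℕ) + 1 < L.length then 1 else 0))
    with hcdef
  have hget : ∀ j : Fin L.length, 1 ≤ L.get j ∧ L.get j ≤ m - 1 :=
    fun j => hmem _ (by simpa using L.get_mem j.1 j.2)
  have hdegl : ∀ j : Fin L.length, (pG (cpar c)).degree (Sum.inl j) = L.get j + 2 := by
    intro j
    rw [cdeg_inl hk]
    have h1 := (hget j).1
    simp only [hcdef]
    split_ifs <;> omega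
  refine ⟨Fin L.length ⊕ Σ j : Fin L.length, Fin (c j), inferInstance, inferInstance,
    pG (cpar c), pG.instDec _, pG_isTree (cpar_root hk) (crk_spec hk), ?_, ?_, ?_⟩
  · -- leaf count
    rw [card_filter_sum]
    have h1 : ((univ : Finset (Fin L.length)).filter
        (fun j => (pG (cpar c)).degree (Sum.inl j) = 1)).card = 0 := by
      rw [Finset.card_eq_zero, Finset.filter_eq_empty_iff]
      intro j _
      rw [hdegl j]
      omega
    have h2 : ((univ : Finset (Σ j : Fin L.length, Fin (c j))).filter
        (fun x => (pG (cpar c)).degree (Sum.inr x) = 1)).card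
        = ∑ j : Fin L.length, c j := by
      rw [Finset.filter_true_of_mem (fun x _ => cdeg_inr hk x), Finset.card_univ]
      simp
    rw [h1, h2, Nat.zero_add]
    -- now ∑ c j = n
    have key : ∀ j : Fin L.length,
        c j + ((if (j : ℕ) = 0 then 0 else 1) + (if (j : ℕ) + 1 < L.length then 1 else 0))
          = L.get j + 2 := by
      intro j
      have h1 := (hget j).1
      simp only [hcdef]
      split_ifs <;> omega
    have hsum1 : (∑ j : Fin L.length, c j)
        + (∑ j : Fin L.length, (if (j : ℕ) = 0 then 0 else 1))
        + (∑ j : Fin L.length, (if (j : ℕ) + 1 < L.length then 1 else 0))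
        = L.sum + 2 * L.length := by
      rw [← Finset.sum_add_distrib, ← Finset.sum_add_distrib]
      have : ∀ j : Fin L.length, c j + (if (j : ℕ) = 0 then 0 else 1)
          + (if (j : ℕ) + 1 < L.length then 1 else 0) = L.get j + 2 := by
        intro j; have := key j; omega
      rw [Finset.sum_congr rfl (fun j _ => this j)]
      rw [Finset.sum_add_distrib]
      rw [show (∑ j : Fin L.length, L.get j) = L.sum from by
        simpa using fin_sum_get L id]
      simp [Finset.card_univ, mul_comm]
    have hS1 : (∑ j : Fin L.length, (if (j : ℕ) = 0 then (0:ℕ) else 1)) = L.length - 1 := by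
      rw [Fin.sum_univ_eq_sum_range (fun j => if j = 0 then (0:ℕ) else 1) L.length]
      have : ∀ j ∈ Finset.range L.length, (if j = 0 then (0:ℕ) else 1)
          = if j ≠ 0 then 1 else 0 := by
        intro j _; by_cases h : j = 0 <;> simp [h]
      rw [Finset.sum_congr rfl this, ← Finset.card_filter]
      rw [show (Finset.range L.length).filter (fun j => j ≠ 0) = Finset.Ico 1 L.length from by
        ext x; simp; omega]
      rw [Nat.card_Ico]
    have hS2 : (∑ j : Fin L.length, (if (j : ℕ) + 1 < L.length then (1:ℕ) else 0))
        = L.length - 1 := by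
      rw [Fin.sum_univ_eq_sum_range (fun j => if j + 1 < L.length then (1:ℕ) else 0) L.length]
      rw [← Finset.card_filter]
      rw [show (Finset.range L.length).filter (fun j => j + 1 < L.length)
          = Finset.range (L.length - 1) from by ext x; simp; omega]
      rw [Finset.card_range]
    omega
  · -- degree bounds
    rintro (j | x) hne
    · rw [hdegl j] at *
      have := hget j
      omega
    · rw [cdeg_inr hk] at hne
      omega
  · -- counts
    intro i hi
    rw [card_filter_sum]
    have h2 : ((univ : Finset (Σ j : Fin L.length, Fin (c j))).filter
        (fun x => (pG (cpar c)).degree (Sum.inr x) = i + 2)).card = 0 := by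
      rw [Finset.card_eq_zero, Finset.filter_eq_empty_iff]
      intro x _
      rw [cdeg_inr hk]
      omega
    have h1 : ((univ : Finset (Fin L.length)).filter
        (fun j => (pG (cpar c)).degree (Sum.inl j) = i + 2)).card = L.count i := by
      rw [← card_filter_get_eq L i]
      congr 1
      apply Finset.filter_congr
      intro j _
      rw [hdegl j]
      omega
    rw [h1, h2, Nat.add_zero]

/-- For any vector `(q_1, …, q_{m−1})` of non-negative integers with at least one
`q_i > 0`, if `2 + Σ_{i=1}^{m−1} i·q_i = n`, then there exists a tree with exactly `n` leaves
whose internal nodes have degrees between 3 and `m+1`, such that for each `i` the number of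
internal nodes of degree `i+2` is exactly `q_i`. -/
theorem stmt_2 (m n : ℕ) (hm : 2 ≤ m) (q : ℕ → ℕ)
    (hq : ∃ i ∈ Finset.Icc 1 (m - 1), 0 < q i)
    (hsum : 2 + ∑ i ∈ Finset.Icc 1 (m - 1), i * q i = n) :
    ∃ (V : Type) (_ : Fintype V) (_ : DecidableEq V) (G : SimpleGraph V)
      (_ : DecidableRel G.Adj),
      G.IsTree ∧
      (Finset.univ.filter (fun v => G.degree v = 1)).card = n ∧
      (∀ v : V, G.degree v ≠ 1 → 3 ≤ G.degree v ∧ G.degree v ≤ m + 1) ∧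
      (∀ i ∈ Finset.Icc 1 (m - 1),
        (Finset.univ.filter (fun v => G.degree v = i + 2)).card = q i) := by
  classical
  obtain ⟨i₀, hi₀, hq₀⟩ := hq
  set L : List ℕ := (Finset.Icc 1 (m - 1)).toList.flatMap (fun i => List.replicate (q i) i)
    with hLdef
  have hcount : ∀ i ∈ Finset.Icc 1 (m - 1), L.count i = q i := by
    intro i hi
    rw [hLdef, List.count_flatMap]
    have : ((Finset.Icc 1 (m - 1)).toList.map
        ((fun l => List.count i l) ∘ fun i' => List.replicate (q i') i')).sum
        = ∑ i' ∈ Finset.Icc 1 (m - 1), if i' = i then q i' else 0 := by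
      rw [← Finset.sum_map_toList]
      congr 1
      apply List.map_congr_left
      intro i' _
      simp [Function.comp, List.count_replicate]
    rw [this, Finset.sum_ite_eq' (Finset.Icc 1 (m - 1)) i (fun i' => q i'), if_pos hi]
  have hmem : ∀ x ∈ L, 1 ≤ x ∧ x ≤ m - 1 := by
    intro x hx
    rw [hLdef] at hx
    obtain ⟨a, ha, hxa⟩ := List.mem_flatMap.1 hx
    have := List.eq_of_mem_replicate hxa
    subst this
    have := Finset.mem_toList.1 ha
    rw [Finset.mem_Icc] at this
    exact this
  have hLsum : L.sum = ∑ i ∈ Finset.Icc 1 (m - 1), i * q i := by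
    rw [hLdef, List.flatMap, List.sum_flatten, List.map_map, ← Finset.sum_map_toList]
    congr 1
    apply List.map_congr_left
    intro i' _
    simp [Function.comp, List.sum_replicate, mul_comm]
  have hLne : L ≠ [] := by
    intro h
    have := hcount i₀ hi₀
    rw [h] at this
    simp at this
    omega
  obtain ⟨V, iF, iD, G, iR, ht, hleaf, hbound, hcnt⟩ :=
    main_construction m n hm L hLne hmem (by rw [hLsum]; exact hsum)
  refine ⟨V, iF, iD, G, iR, ht, hleaf, hbound, ?_⟩
  intro i hi
  rw [hcnt i (Finset.mem_Icc.1 hi).1, hcount i hi]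
end

section
/- Let T be a finite tree with latency factors l_d ≥ 0 as above (l_0 = l_1 = 0) and define φ(T) as the maximum over simple paths (v_0, …, v_k) in T of Σ_{i=0}^{k} l_{deg(v_i,T)−1}. If an ordered edge (a,b) satisfies w(a,b) − l_{deg(a,T)−1} ≤ w(b,a) and w(a,b) > w(b,a), then φ(T) = w(a,b) + w(b,a), where w is the directed subtree latency defined recursively by w(a,b) = l_{deg(a,T)−1} + max over neighbors c ≠ b of a of w(c,a), with w(a,b) = 0 when a is a leaf. -/
open SimpleGraph Walk
set_option linter.unusedSectionVars false

section Aux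
variable {V : Type} [Fintype V] [DecidableEq V] {G : SimpleGraph V}

/-- latency of a list -/
private lemma aux_single_le (f : V → ℝ) (hf : ∀ z, 0 ≤ f z) {x : V} {s : List V}
    (hx : x ∈ s) : f x ≤ (s.map f).sum :=
  List.single_le_sum (by simp only [List.mem_map]; rintro _ ⟨z, _, rfl⟩; exact hf z) _
    (List.mem_map_of_mem (f := f) hx)

private lemma aux_sum_nonneg (f : V → ℝ) (hf : ∀ z, 0 ≤ f z) (s : List V) :
    0 ≤ (s.map f).sum :=
  List.sum_nonneg (by simp only [List.mem_map]; rintro _ ⟨z, _, rfl⟩; exact hf z)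

private lemma aux_lat_reverse (f : V → ℝ) {u v : V} (p : G.Walk u v) :
    (p.reverse.support.map f).sum = (p.support.map f).sum := by
  rw [support_reverse, List.map_reverse, List.sum_reverse]

private lemma aux_lat_cons_aux (f : V → ℝ) {u v : V} (p : G.Walk u v) :
    (p.support.map f).sum = f u + ((p.support.tail).map f).sum := by
  conv_lhs => rw [support_eq_cons p]
  simp only [List.map_cons, List.sum_cons]

private lemma aux_lat_append (f : V → ℝ) {u x v : V} (p : G.Walk u x) (q : G.Walk x v) :
    ((p.append q).support.map f).sum = (p.support.map f).sum + (q.support.map f).sum - f x := by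
  rw [support_append, List.map_append, List.sum_append, aux_lat_cons_aux f q]
  ring

private lemma aux_lat_concat (f : V → ℝ) {u x y : V} (p : G.Walk u x) (h : G.Adj x y) :
    ((p.concat h).support.map f).sum = (p.support.map f).sum + f y := by
  rw [support_concat, List.map_append, List.sum_append]
  simp

private lemma aux_path_unique (hT : G.IsTree) {x y : V} {p q : G.Walk x y}
    (hp : p.IsPath) (hq : q.IsPath) : p = q :=
  (hT.existsUnique_path x y).unique hp hq

private lemma aux_edge_path (hT : G.IsTree) {x y : V} (hxy : G.Adj x y)
    {p : G.Walk x y} (hp : p.IsPath) : p.support = [x, y] := by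
  have h2 : (Walk.cons hxy (Walk.nil : G.Walk y y)).IsPath := by
    rw [Walk.cons_isPath_iff]
    exact ⟨Walk.IsPath.nil, by simp [hxy.ne]⟩
  rw [aux_path_unique hT hp h2]
  simp

private lemma aux_concat_isPath {x a y : V} {p : G.Walk x a} (hp : p.IsPath)
    (hy : y ∉ p.support) (h : G.Adj a y) : (p.concat h).IsPath := by
  rw [Walk.isPath_def, support_concat]
  rw [List.nodup_append]
  exact ⟨hp.support_nodup, List.nodup_singleton y, by
    intro z hz b hb hzb; simp at hb; rw [hzb, hb] at hz; exact hy hz⟩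

/-- first point of a path q lying in a set S -/
private lemma aux_exists_first (S : Set V) :
    ∀ {x y : V} (q : G.Walk x y), q.IsPath → y ∈ S →
      ∃ (t : V) (q1 : G.Walk x t), q1.IsPath ∧ t ∈ S ∧
        (∀ z ∈ q1.support, z ∈ S → z = t) ∧ (∀ z ∈ q1.support, z ∈ q.support) := by
  intro x y q
  induction q with
  | nil =>
    intro _ hy
    refine ⟨_, Walk.nil, Walk.IsPath.nil, hy, ?_, ?_⟩
    · intro z hz _; simpa using hz
    · intro z hz; exact hz
  | @cons x x₁ y h q' ih =>
    intro hq hy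
    by_cases hx : x ∈ S
    · exact ⟨x, Walk.nil, Walk.IsPath.nil, hx, by simp, by simp⟩
    · obtain ⟨t, q1', hq1', htS, hmin, hsub⟩ := ih hq.of_cons hy
      have hxns : x ∉ q'.support := (Walk.cons_isPath_iff h q').1 hq |>.2
      refine ⟨t, Walk.cons h q1', ?_, htS, ?_, ?_⟩
      · rw [Walk.cons_isPath_iff]
        exact ⟨hq1', fun hmem => hxns (hsub x hmem)⟩
      · intro z hz hzS
        rw [Walk.support_cons, List.mem_cons] at hz
        rcases hz with h1 | h1
        · exact absurd (h1 ▸ hzS) hx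
        · exact hmin z h1 hzS
      · intro z hz
        rw [Walk.support_cons, List.mem_cons] at hz
        rw [Walk.support_cons, List.mem_cons]
        rcases hz with h1 | h1
        · exact Or.inl h1
        · exact Or.inr (hsub z h1)
end Aux

section Key
variable {V : Type} [Fintype V] [DecidableEq V] {G : SimpleGraph V}

private lemma aux_dist_sub (hconn : G.Connected) {x y z : V} {p : G.Walk x y}
    (hlen : p.length = G.dist x y) (hz : z ∈ p.support) :
    G.dist x z + G.dist z y ≤ G.dist x y := by
  have h1 := SimpleGraph.dist_le (p.takeUntil z hz)
  have h2 := SimpleGraph.dist_le (p.dropUntil z hz)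
  have h3 : (p.takeUntil z hz).length + (p.dropUntil z hz).length = p.length := by
    rw [← Walk.length_append, Walk.take_spec]
  omega

private lemma aux_key (hT : G.IsTree) (r : V) {c d c' : V} (hcd : G.Adj c d)
    (hc' : G.Adj c' c) (hne : c' ≠ d) (hdist : G.dist r c = G.dist r d + 1) :
    G.dist r c' = G.dist r c + 1 := by
  have hconn := hT.isConnected
  -- upper bound
  obtain ⟨pc, hpc⟩ := (hconn r c).exists_walk_length_eq_dist
  have hub : G.dist r c' ≤ G.dist r c + 1 := by
    have := SimpleGraph.dist_le (pc.concat hc'.symm)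
    rwa [Walk.length_concat, hpc] at this
  by_cases hlow : G.dist r c + 1 ≤ G.dist r c'
  · omega
  push_neg at hlow
  exfalso
  have hle : G.dist r c' ≤ G.dist r c := by omega
  obtain ⟨p', hp', hp'len⟩ := hconn.exists_path_of_dist r c'
  have hcc' : G.dist c c' = 1 := SimpleGraph.dist_eq_one_iff_adj.2 hc'.symm
  have hcp' : c ∉ p'.support := by
    intro hc
    have := aux_dist_sub hconn hp'len hc
    omega
  obtain ⟨pd, hpd, hpdlen⟩ := hconn.exists_path_of_dist r d
  have hdcd : G.dist d c = 1 := SimpleGraph.dist_eq_one_iff_adj.2 hcd.symm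
  have hcpd : c ∉ pd.support := by
    intro hc
    have := aux_dist_sub hconn hpdlen hc
    omega
  have hP2 : (p'.concat hc'.symm.symm).IsPath := aux_concat_isPath hp' hcp' hc'
  have hP1 : (pd.concat hcd.symm).IsPath := aux_concat_isPath hpd hcpd hcd.symm
  have heq := aux_path_unique hT hP1 hP2
  have hd1 : d ∈ (pd.concat hcd.symm).support := by
    rw [Walk.support_concat]
    exact List.mem_append_left _ (Walk.end_mem_support pd)
  rw [heq, Walk.support_concat, List.mem_append] at hd1
  have hdp' : d ∈ p'.support := by
    rcases hd1 with h | h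
    · exact h
    · simp at h; exact absurd h hcd.ne'
  -- now d ∈ p' gives dist r d + dist d c' ≤ dist r c'
  have hsum := aux_dist_sub hconn hp'len hdp'
  have hdc' : G.dist d c' = 1 := by
    have hpos : 0 < G.dist d c' := hconn.pos_dist_of_ne (fun h => hne h.symm)
    omega
  have hadj : G.Adj d c' := SimpleGraph.dist_eq_one_iff_adj.1 hdc'
  -- two distinct paths from d to c'
  have hQ1 : (Walk.cons hadj (Walk.nil : G.Walk c' c')).IsPath := by
    rw [Walk.cons_isPath_iff]; exact ⟨Walk.IsPath.nil, by simp [hadj.ne]⟩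
  have hQ2 : (Walk.cons hcd.symm (Walk.cons hc'.symm (Walk.nil : G.Walk c' c'))).IsPath := by
    rw [Walk.cons_isPath_iff, Walk.cons_isPath_iff]
    refine ⟨⟨Walk.IsPath.nil, by simp [hc'.ne']⟩, ?_⟩
    simp only [Walk.support_cons, Walk.support_nil, List.mem_cons, List.mem_singleton]
    push_neg
    exact ⟨hcd.ne', fun (h : d = c') => hne h.symm, List.not_mem_nil⟩
  have := aux_path_unique hT hQ1 hQ2
  have hlen := congrArg Walk.length this
  simp at hlen

end Key

section Main
variable {V : Type} [Fintype V] [DecidableEq V] {G : SimpleGraph V} [DecidableRel G.Adj]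

private lemma aux_S_finite (w : V → V → ℝ) (c d : V) :
    {x : ℝ | ∃ e : V, G.Adj e c ∧ e ≠ d ∧ x = w e c}.Finite := by
  apply Set.Finite.subset (Set.finite_range (fun e => w e c))
  rintro x ⟨e, _, _, rfl⟩
  exact ⟨e, rfl⟩

private lemma aux_exists_other_nbr {c d : V} (hcd : G.Adj c d) (hdeg : G.degree c ≠ 1) :
    ∃ c', G.Adj c' c ∧ c' ≠ d := by
  have hd : d ∈ G.neighborFinset c := by simp [hcd]
  have h1 : 1 ≤ G.degree c := by
    rw [SimpleGraph.degree]; exact Finset.card_pos.2 ⟨d, hd⟩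
  have h2 : 1 < G.degree c := lt_of_le_of_ne h1 (Ne.symm hdeg)
  rw [SimpleGraph.degree] at h2
  obtain ⟨e, he, e', he', hne⟩ := Finset.one_lt_card.1 h2
  by_cases hed : e = d
  · subst hed
    refine ⟨e', ?_, fun (h : e' = e) => hne h.symm⟩
    rw [SimpleGraph.mem_neighborFinset] at he'
    exact he'.symm
  · refine ⟨e, ?_, hed⟩
    rw [SimpleGraph.mem_neighborFinset] at he
    exact he.symm

private lemma aux_main2 (hT : G.IsTree)
    (l : ℕ → ℝ) (hl0 : l 0 = 0)
    (w : V → V → ℝ)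
    (hwleaf : ∀ a b : V, G.Adj a b → G.degree a = 1 → w a b = 0)
    (hwnode : ∀ a b : V, G.Adj a b → G.degree a ≠ 1 →
      w a b = l (G.degree a - 1) +
        sSup {x : ℝ | ∃ c : V, G.Adj c a ∧ c ≠ b ∧ x = w c a})
    (r : V) :
    ∀ (n : ℕ) (c d : V), G.Adj c d → G.dist r c = G.dist r d + 1 →
      Fintype.card V - G.dist r c = n →
      ∃ (u : V) (p : G.Walk u c), p.IsPath ∧ d ∉ p.support ∧
        (p.support.map (fun z => l (G.degree z - 1))).sum = w c d := by
  intro n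
  induction n using Nat.strong_induction_on with
  | _ n ih =>
    intro c d hcd hdist hn
    by_cases hdeg : G.degree c = 1
    · refine ⟨c, Walk.nil, Walk.IsPath.nil, ?_, ?_⟩
      · simp [hcd.ne']
      · simp [hwleaf c d hcd hdeg, hdeg, hl0]
    · obtain ⟨c', hc', hc'd⟩ := aux_exists_other_nbr hcd hdeg
      set S := {x : ℝ | ∃ e : V, G.Adj e c ∧ e ≠ d ∧ x = w e c} with hS
      have hSfin : S.Finite := aux_S_finite w c d
      have hSne : S.Nonempty := ⟨w c' c, c', hc', hc'd, rfl⟩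
      have hmem := hSne.csSup_mem hSfin
      obtain ⟨c₀, hc₀, hc₀d, hsup⟩ := hmem
      have hkey : G.dist r c₀ = G.dist r c + 1 := aux_key hT r hcd hc₀ hc₀d hdist
      have hcard : G.dist r c₀ < Fintype.card V := by
        obtain ⟨p, hp, hplen⟩ := hT.isConnected.exists_path_of_dist r c₀
        rw [← hplen]; exact hp.length_lt
      have hlt : Fintype.card V - G.dist r c₀ < n := by omega
      obtain ⟨u, p₀, hp₀, hcp₀, hlat⟩ :=
        ih _ hlt c₀ c hc₀ hkey rfl
      have hdp₀ : d ∉ p₀.support := by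
        intro hd
        have hQ1 : (p₀.dropUntil d hd).IsPath := hp₀.dropUntil hd
        have hcQ1 : c ∉ (p₀.dropUntil d hd).support :=
          fun h => hcp₀ (Walk.support_dropUntil_subset p₀ hd h)
        have hQ2 : (Walk.cons hcd.symm (Walk.cons (hc₀.symm) (Walk.nil : G.Walk c₀ c₀))).IsPath := by
          rw [Walk.cons_isPath_iff, Walk.cons_isPath_iff]
          refine ⟨⟨Walk.IsPath.nil, by simp [hc₀.ne']⟩, ?_⟩
          simp only [Walk.support_cons, Walk.support_nil, List.mem_cons,
            List.mem_singleton, List.not_mem_nil]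
          push_neg
          exact ⟨hcd.ne', fun (h : d = c₀) => hc₀d h.symm, trivial⟩
        have := aux_path_unique hT hQ1 hQ2
        apply hcQ1
        rw [this]
        simp
      refine ⟨u, p₀.concat hc₀, aux_concat_isPath hp₀ hcp₀ hc₀, ?_, ?_⟩
      · rw [Walk.support_concat, List.mem_append]
        push_neg
        exact ⟨hdp₀, by simp [hcd.ne']⟩
      · rw [aux_lat_concat, hlat, hwnode c d hcd hdeg, ← hS, ← hsup]
        ring

private lemma aux_achieve (hT : G.IsTree)
    (l : ℕ → ℝ) (hl0 : l 0 = 0)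
    (w : V → V → ℝ)
    (hwleaf : ∀ a b : V, G.Adj a b → G.degree a = 1 → w a b = 0)
    (hwnode : ∀ a b : V, G.Adj a b → G.degree a ≠ 1 →
      w a b = l (G.degree a - 1) +
        sSup {x : ℝ | ∃ c : V, G.Adj c a ∧ c ≠ b ∧ x = w c a})
    {c d : V} (hcd : G.Adj c d) :
    ∃ (u : V) (p : G.Walk u c), p.IsPath ∧ d ∉ p.support ∧
      (p.support.map (fun z => l (G.degree z - 1))).sum = w c d := by
  apply aux_main2 hT l hl0 w hwleaf hwnode d (Fintype.card V - G.dist d c) c d hcd _ rfl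
  rw [SimpleGraph.dist_self, SimpleGraph.dist_eq_one_iff_adj.2 hcd.symm]

end Main

section Main1
variable {V : Type} [Fintype V] [DecidableEq V] {G : SimpleGraph V} [DecidableRel G.Adj]

variable (hT : G.IsTree)
    (l : ℕ → ℝ) (hl0 : l 0 = 0) (hlnn : ∀ d, 0 ≤ l d)
    (w : V → V → ℝ)
    (hwleaf : ∀ a b : V, G.Adj a b → G.degree a = 1 → w a b = 0)
    (hwnode : ∀ a b : V, G.Adj a b → G.degree a ≠ 1 →
      w a b = l (G.degree a - 1) +
        sSup {x : ℝ | ∃ c : V, G.Adj c a ∧ c ≠ b ∧ x = w c a})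

include hT hl0 hlnn hwleaf hwnode

private lemma aux_w_ge_f {c d : V} (hcd : G.Adj c d) :
    l (G.degree c - 1) ≤ w c d := by
  obtain ⟨u, p, hp, hd, hlat⟩ := aux_achieve hT l hl0 w hwleaf hwnode hcd
  rw [← hlat]
  exact aux_single_le (fun z => l (G.degree z - 1)) (fun z => hlnn _) (Walk.end_mem_support p)

private lemma aux_main1' :
    ∀ {c u : V} (q : G.Walk c u), q.IsPath → ∀ d, G.Adj c d → d ∉ q.support →
      (q.support.map (fun z => l (G.degree z - 1))).sum ≤ w c d := by
  intro c u q
  induction q with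
  | nil =>
    intro _ d hcd _
    simpa using aux_w_ge_f hT l hl0 hlnn w hwleaf hwnode hcd
  | @cons c c₁ u h q' ih =>
    intro hq d hcd hd
    have hc₁c : G.Adj c₁ c := h.symm
    have hcq' : c ∉ q'.support := ((Walk.cons_isPath_iff h q').1 hq).2
    have hih : (q'.support.map (fun z => l (G.degree z - 1))).sum ≤ w c₁ c :=
      ih ((Walk.cons_isPath_iff h q').1 hq).1 c hc₁c hcq'
    have hc₁d : c₁ ≠ d := by
      intro hh
      apply hd
      rw [Walk.support_cons, List.mem_cons]
      exact Or.inr (hh ▸ Walk.start_mem_support q')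
    have hdeg : G.degree c ≠ 1 := by
      intro hdeg1
      have hsub : ({c₁, d} : Finset V) ⊆ G.neighborFinset c := by
        intro z hz
        rw [Finset.mem_insert, Finset.mem_singleton] at hz
        rcases hz with rfl | rfl
        · simpa using hc₁c.symm
        · simpa using hcd
      have := Finset.card_le_card hsub
      rw [Finset.card_pair hc₁d] at this
      rw [SimpleGraph.degree] at hdeg1
      omega
    rw [hwnode c d hcd hdeg]
    have hmem : w c₁ c ∈ {x : ℝ | ∃ e : V, G.Adj e c ∧ e ≠ d ∧ x = w e c} :=
      ⟨c₁, hc₁c, hc₁d, rfl⟩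
    have hle : w c₁ c ≤ sSup {x : ℝ | ∃ e : V, G.Adj e c ∧ e ≠ d ∧ x = w e c} :=
      le_csSup (aux_S_finite w c d).bddAbove hmem
    rw [Walk.support_cons, List.map_cons, List.sum_cons]
    linarith

private lemma aux_main1 {c d u : V} (p : G.Walk u c) (hp : p.IsPath)
    (hcd : G.Adj c d) (hd : d ∉ p.support) :
    (p.support.map (fun z => l (G.degree z - 1))).sum ≤ w c d := by
  rw [← aux_lat_reverse]
  apply aux_main1' hT l hl0 hlnn w hwleaf hwnode p.reverse hp.reverse d hcd
  rwa [Walk.support_reverse, List.mem_reverse]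

end Main1

section Side
variable {V : Type} [Fintype V] [DecidableEq V] {G : SimpleGraph V} [DecidableRel G.Adj]

private lemma aux_split_disjoint {u v c : V} (p : G.Walk u v) (hp : p.IsPath)
    (hc : c ∈ p.support) :
    ∀ z, z ∈ (p.takeUntil c hc).support → z ∈ (p.dropUntil c hc).support → z = c := by
  have hnodup : ((p.takeUntil c hc).support ++ (p.dropUntil c hc).support.tail).Nodup := by
    rw [← Walk.support_append, Walk.take_spec]
    exact hp.support_nodup
  rw [List.nodup_append] at hnodup
  intro z hz1 hz2
  by_contra hzc
  have : z ∈ (p.dropUntil c hc).support.tail := by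
    have := Walk.support_eq_cons (p.dropUntil c hc)
    rw [this, List.mem_cons] at hz2
    tauto
  exact hnodup.2.2 z hz1 z this rfl

private lemma aux_split_lat (l : ℕ → ℝ) {u v c : V} (p : G.Walk u v) (hc : c ∈ p.support) :
    (p.support.map (fun z => l (G.degree z - 1))).sum =
      ((p.takeUntil c hc).support.map (fun z => l (G.degree z - 1))).sum +
      ((p.dropUntil c hc).support.map (fun z => l (G.degree z - 1))).sum -
      l (G.degree c - 1) := by
  conv_lhs => rw [← Walk.take_spec p hc]
  exact aux_lat_append _ _ _

variable (hT : G.IsTree)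
    (l : ℕ → ℝ) (hl0 : l 0 = 0) (hlnn : ∀ d, 0 ≤ l d)
    (w : V → V → ℝ)
    (hwleaf : ∀ a b : V, G.Adj a b → G.degree a = 1 → w a b = 0)
    (hwnode : ∀ a b : V, G.Adj a b → G.degree a ≠ 1 →
      w a b = l (G.degree a - 1) +
        sSup {x : ℝ | ∃ c : V, G.Adj c a ∧ c ≠ b ∧ x = w c a})

include hT hl0 hlnn hwleaf hwnode

private lemma aux_side {c d u v t : V} (p : G.Walk u v) (q1 : G.Walk c t)
    (hcd : G.Adj c d) (hp : p.IsPath) (hq1 : q1.IsPath)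
    (hdp : d ∉ p.support) (hcp : c ∉ p.support) (hdq : d ∉ q1.support)
    (ht : t ∈ p.support) (hmin : ∀ z ∈ q1.support, z ∈ p.support → z = t) :
    (p.support.map (fun z => l (G.degree z - 1))).sum ≤
      2 * w c d - l (G.degree c - 1) := by
  set f : V → ℝ := fun z => l (G.degree z - 1) with hf
  set tp := p.takeUntil t ht with htp
  set dp := p.dropUntil t ht with hdp'
  set qr := q1.reverse with hqr
  have hqrsup : qr.support = q1.support.reverse := Walk.support_reverse q1
  have hqrnodup : qr.support.Nodup := hq1.reverse.support_nodup
  have htl_sub : ∀ z ∈ qr.support.tail, z ∈ q1.support := by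
    intro z hz
    have : z ∈ qr.support := List.mem_of_mem_tail hz
    rw [hqrsup, List.mem_reverse] at this
    exact this
  have htl_ne_t : t ∉ qr.support.tail := by
    intro hmem
    have := Walk.support_eq_cons qr
    rw [this] at hqrnodup
    exact (List.nodup_cons.1 hqrnodup).1 hmem
  have htl_nodup : qr.support.tail.Nodup := by
    have := Walk.support_eq_cons qr
    rw [this] at hqrnodup
    exact (List.nodup_cons.1 hqrnodup).2
  -- P1
  have htp_path : tp.IsPath := hp.takeUntil ht
  have hdp_path : dp.IsPath := hp.dropUntil ht
  have hdisj1 : ∀ z ∈ tp.support, z ∉ qr.support.tail := by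
    intro z hz hz'
    have hzp : z ∈ p.support := Walk.support_takeUntil_subset p ht hz
    have := hmin z (htl_sub z hz') hzp
    exact htl_ne_t (this ▸ hz')
  have hdisj2 : ∀ z ∈ dp.support, z ∉ qr.support.tail := by
    intro z hz hz'
    have hzp : z ∈ p.support := Walk.support_dropUntil_subset p ht hz
    have := hmin z (htl_sub z hz') hzp
    exact htl_ne_t (this ▸ hz')
  have hP1 : (tp.append qr).IsPath := by
    rw [Walk.isPath_def, Walk.support_append, List.nodup_append]
    exact ⟨htp_path.support_nodup, htl_nodup, fun z hz b hb hzb => hdisj1 z hz (hzb ▸ hb)⟩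
  have hP2 : (dp.reverse.append qr).IsPath := by
    rw [Walk.isPath_def, Walk.support_append, List.nodup_append]
    refine ⟨hdp_path.reverse.support_nodup, htl_nodup, fun z hz => ?_⟩
    rw [Walk.support_reverse, List.mem_reverse] at hz
    exact fun b hb hzb => hdisj2 z hz (hzb ▸ hb)
  have hdP1 : d ∉ (tp.append qr).support := by
    rw [Walk.support_append, List.mem_append]
    push_neg
    constructor
    · exact fun h => hdp (Walk.support_takeUntil_subset p ht h)
    · exact fun h => hdq (htl_sub d h)
  have hdP2 : d ∉ (dp.reverse.append qr).support := by
    rw [Walk.support_append, List.mem_append]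
    push_neg
    constructor
    · intro h
      rw [Walk.support_reverse, List.mem_reverse] at h
      exact hdp (Walk.support_dropUntil_subset p ht h)
    · exact fun h => hdq (htl_sub d h)
  have hb1 : ((tp.append qr).support.map f).sum ≤ w c d :=
    aux_main1 hT l hl0 hlnn w hwleaf hwnode _ hP1 hcd hdP1
  have hb2 : ((dp.reverse.append qr).support.map f).sum ≤ w c d :=
    aux_main1 hT l hl0 hlnn w hwleaf hwnode _ hP2 hcd hdP2
  have e1 : ((tp.append qr).support.map f).sum =
      (tp.support.map f).sum + (qr.support.map f).sum - f t := aux_lat_append f tp qr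
  have e2 : ((dp.reverse.append qr).support.map f).sum =
      (dp.support.map f).sum + (qr.support.map f).sum - f t := by
    rw [aux_lat_append f dp.reverse qr, aux_lat_reverse]
  have e3 : (p.support.map f).sum =
      (tp.support.map f).sum + (dp.support.map f).sum - f t := aux_split_lat l p ht
  have e4 : (qr.support.map f).sum = (q1.support.map f).sum := aux_lat_reverse f q1
  have hct : c ≠ t := fun h => hcp (h ▸ ht)
  have e5 : f c + f t ≤ (q1.support.map f).sum := by
    have hq1c : q1.support = c :: q1.support.tail := Walk.support_eq_cons q1
    have htmem : t ∈ q1.support.tail := by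
      have : t ∈ q1.support := Walk.end_mem_support q1
      rw [hq1c, List.mem_cons] at this
      rcases this with h | h
      · exact absurd h.symm hct
      · exact h
    have : f t ≤ (q1.support.tail.map f).sum :=
      aux_single_le f (fun z => hlnn _) htmem
    rw [hq1c, List.map_cons, List.sum_cons]
    linarith
  have hft : 0 ≤ f t := hlnn _
  have hfc : 0 ≤ f c := hlnn _
  rw [hf] at *
  linarith

end Side

/-- Let `T` be a finite tree with latency factors `l d ≥ 0` (`l 0 = l 1 = 0`),
and define `φ(T)` as the maximum over simple paths `(v_0, …, v_k)` in `T` of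
`Σ_{i=0}^{k} l (deg v_i − 1)`.  Let `w : V → V → ℝ` be the directed subtree latency:
`w a b = 0` when `a` is a leaf, and otherwise
`w a b = l (deg a − 1) + max over neighbors c ≠ b of a of (w c a)`.
If an ordered edge `(a,b)` satisfies `w a b − l (deg a − 1) ≤ w b a` and `w a b > w b a`,
then `φ(T) = w a b + w b a`. -/
theorem stmt_17 {V : Type} [Fintype V] [DecidableEq V]
    (G : SimpleGraph V) [DecidableRel G.Adj] (hT : G.IsTree)
    (l : ℕ → ℝ) (hl0 : l 0 = 0) (hl1 : l 1 = 0) (hlnn : ∀ d, 0 ≤ l d)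
    (w : V → V → ℝ)
    (hwleaf : ∀ a b : V, G.Adj a b → G.degree a = 1 → w a b = 0)
    (hwnode : ∀ a b : V, G.Adj a b → G.degree a ≠ 1 →
      w a b = l (G.degree a - 1) +
        sSup {x : ℝ | ∃ c : V, G.Adj c a ∧ c ≠ b ∧ x = w c a})
    (a b : V) (hab : G.Adj a b)
    (h1 : w a b - l (G.degree a - 1) ≤ w b a)
    (h2 : w b a < w a b) :
    sSup {x : ℝ | ∃ (u v : V) (p : G.Walk u v), p.IsPath ∧
        x = (p.support.map (fun z => l (G.degree z - 1))).sum}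
      = w a b + w b a := by
  have hconn := hT.isConnected
  set f : V → ℝ := fun z => l (G.degree z - 1) with hfdef
  -- achieving paths on both sides
  obtain ⟨u₀, pa, hpa, hbpa, hlata⟩ := aux_achieve hT l hl0 w hwleaf hwnode hab
  obtain ⟨v₀, pb, hpb, hapb, hlatb⟩ := aux_achieve hT l hl0 w hwleaf hwnode hab.symm
  have hdisj : ∀ x, x ∈ pa.support → x ∈ pb.support → False := by
    intro x hx1 hx2
    have hR1 : ((pa.dropUntil x hx1).concat hab).IsPath :=
      aux_concat_isPath (hpa.dropUntil hx1)
        (fun h => hbpa (Walk.support_dropUntil_subset pa hx1 h)) hab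
    have hR2 := hpb.dropUntil hx2
    have heq := aux_path_unique hT hR1 hR2
    have hmem : a ∈ ((pa.dropUntil x hx1).concat hab).support := by
      rw [Walk.support_concat]
      exact List.mem_append_left _ (Walk.end_mem_support _)
    rw [heq] at hmem
    exact hapb (Walk.support_dropUntil_subset pb hx2 hmem)
  have hsupstar : (pa.append (Walk.cons hab pb.reverse)).support
      = pa.support ++ pb.support.reverse := by
    rw [Walk.support_append, Walk.support_cons, List.tail_cons, Walk.support_reverse]
  have hpstar : (pa.append (Walk.cons hab pb.reverse)).IsPath := by
    rw [Walk.isPath_def, hsupstar, List.nodup_append]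
    refine ⟨hpa.support_nodup, List.nodup_reverse.2 hpb.support_nodup, ?_⟩
    intro z hz b hb hzb
    rw [List.mem_reverse] at hb
    exact hdisj z hz (hzb ▸ hb)
  have hlatstar : ((pa.append (Walk.cons hab pb.reverse)).support.map f).sum
      = w a b + w b a := by
    rw [hsupstar, List.map_append, List.sum_append, List.map_reverse, List.sum_reverse,
      hfdef, hlata, hlatb]
  apply IsGreatest.csSup_eq
  constructor
  · exact ⟨u₀, v₀, pa.append (Walk.cons hab pb.reverse), hpstar, hlatstar.symm⟩
  · rintro x ⟨u, v, p, hp, rfl⟩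
    by_cases hax : a ∈ p.support <;> by_cases hbx : b ∈ p.support
    · -- both a and b on p
      have hdisjad := aux_split_disjoint p hp hax
      have hsplit := aux_split_lat l p hax
      have htp_path := hp.takeUntil hax
      have hdp_path := hp.dropUntil hax
      by_cases hbd : b ∈ (p.dropUntil a hax).support
      · -- a then b
        have hsupdp1 : ((p.dropUntil a hax).takeUntil b hbd).support = [a, b] :=
          aux_edge_path hT hab (hdp_path.takeUntil hbd)
        have hsplit2 := aux_split_lat l (p.dropUntil a hax) hbd
        have hlatdp1 : (((p.dropUntil a hax).takeUntil b hbd).support.map f).sum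
            = f a + f b := by rw [hsupdp1]; simp
        have hbtp : b ∉ (p.takeUntil a hax).support := by
          intro h
          exact hab.ne' (hdisjad b h hbd)
        have hadp2 : a ∉ ((p.dropUntil a hax).dropUntil b hbd).support := by
          intro h
          exact hab.ne (aux_split_disjoint (p.dropUntil a hax) hdp_path hbd a
            (Walk.start_mem_support _) h)
        have hb1 : ((p.takeUntil a hax).support.map f).sum ≤ w a b :=
          aux_main1 hT l hl0 hlnn w hwleaf hwnode _ htp_path hab hbtp
        have hb2 : (((p.dropUntil a hax).dropUntil b hbd).support.map f).sum ≤ w b a :=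
          aux_main1' hT l hl0 hlnn w hwleaf hwnode _ (hdp_path.dropUntil hbd)
            a hab.symm hadp2
        rw [hfdef] at *
        linarith
      · -- b then a
        have hbtp : b ∈ (p.takeUntil a hax).support := by
          rw [← Walk.take_spec p hax, Walk.mem_support_append_iff] at hbx
          tauto
        have hdisjtb := aux_split_disjoint (p.takeUntil a hax) htp_path hbtp
        have hsplit2 := aux_split_lat l (p.takeUntil a hax) hbtp
        have hsuptp2 : (((p.takeUntil a hax)).dropUntil b hbtp).support = [b, a] :=
          aux_edge_path hT hab.symm (htp_path.dropUntil hbtp)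
        have hlattp2 : ((((p.takeUntil a hax)).dropUntil b hbtp).support.map f).sum
            = f b + f a := by rw [hsuptp2]; simp
        have hatp1 : a ∉ ((p.takeUntil a hax).takeUntil b hbtp).support := by
          intro h
          have ha2 : a ∈ ((p.takeUntil a hax).dropUntil b hbtp).support := by
            rw [hsuptp2]; simp
          exact hab.ne (hdisjtb a h ha2)
        have hbdp : b ∉ (p.dropUntil a hax).support := hbd
        have hb1 : (((p.takeUntil a hax).takeUntil b hbtp).support.map f).sum ≤ w b a :=
          aux_main1 hT l hl0 hlnn w hwleaf hwnode _ (htp_path.takeUntil hbtp)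
            hab.symm hatp1
        have hb2 : ((p.dropUntil a hax).support.map f).sum ≤ w a b :=
          aux_main1' hT l hl0 hlnn w hwleaf hwnode _ hdp_path b hab hbdp
        rw [hfdef] at *
        linarith
    · -- only a on p
      have hsplit := aux_split_lat l p hax
      have hbtp : b ∉ (p.takeUntil a hax).support :=
        fun h => hbx (Walk.support_takeUntil_subset p hax h)
      have hbdp : b ∉ (p.dropUntil a hax).support :=
        fun h => hbx (Walk.support_dropUntil_subset p hax h)
      have hb1 : ((p.takeUntil a hax).support.map f).sum ≤ w a b :=
        aux_main1 hT l hl0 hlnn w hwleaf hwnode _ (hp.takeUntil hax) hab hbtp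
      have hb2 : ((p.dropUntil a hax).support.map f).sum ≤ w a b :=
        aux_main1' hT l hl0 hlnn w hwleaf hwnode _ (hp.dropUntil hax) b hab hbdp
      have hfa : f a = l (G.degree a - 1) := rfl
      rw [hfdef] at *
      linarith
    · -- only b on p
      have hsplit := aux_split_lat l p hbx
      have hatp : a ∉ (p.takeUntil b hbx).support :=
        fun h => hax (Walk.support_takeUntil_subset p hbx h)
      have hadp : a ∉ (p.dropUntil b hbx).support :=
        fun h => hax (Walk.support_dropUntil_subset p hbx h)
      have hb1 : ((p.takeUntil b hbx).support.map f).sum ≤ w b a :=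
        aux_main1 hT l hl0 hlnn w hwleaf hwnode _ (hp.takeUntil hbx) hab.symm hatp
      have hb2 : ((p.dropUntil b hbx).support.map f).sum ≤ w b a :=
        aux_main1' hT l hl0 hlnn w hwleaf hwnode _ (hp.dropUntil hbx) a hab.symm hadp
      have hfb : 0 ≤ f b := hlnn _
      rw [hfdef] at *
      linarith
    · -- neither a nor b on p
      obtain ⟨q0⟩ := hconn.preconnected a u
      obtain ⟨t, q1, hq1, htS, hmin', hsub⟩ :=
        aux_exists_first {z : V | z ∈ p.support} q0.bypass q0.bypass_isPath
          (Walk.start_mem_support p)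
      have htp : t ∈ p.support := htS
      have hmin : ∀ z ∈ q1.support, z ∈ p.support → z = t := fun z hz hz' => hmin' z hz hz'
      by_cases hbq : b ∈ q1.support
      · -- go to b's side
        have haq2 : a ∉ (q1.dropUntil b hbq).support := by
          intro h
          exact hab.ne (aux_split_disjoint q1 hq1 hbq a (Walk.start_mem_support _) h)
        have hbound := aux_side hT l hl0 hlnn w hwleaf hwnode p (q1.dropUntil b hbq)
          hab.symm hp (hq1.dropUntil hbq) hax hbx haq2 htp
          (fun z hz hz' => hmin z (Walk.support_dropUntil_subset q1 hbq hz) hz')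
        have hfb : 0 ≤ f b := hlnn _
        rw [hfdef] at *
        linarith
      · -- stay on a's side
        have hbound := aux_side hT l hl0 hlnn w hwleaf hwnode p q1
          hab hp hq1 hbx hax hbq htp hmin
        rw [hfdef] at *
        linarith
end
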